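/- For a configuration of four points on the CR sphere S³ given in homogeneous coordinates (with respect to the Hermitian form ⟨z,w⟩ = w̄₃z₁ + w̄₂z₂ + w̄₁z₃) by x₁=(1,0,0), x₂=(0,0,1), x₃=((−1+it)/2, 1, 1), x₄=(|z|²(−1+is)/2, z, 1), with their tangent-line duals f₁=(0,0,1), f₂=(1,0,0), f₃=(1,1,(−1−it)/2), f₄=(1, z̄, −|z|²(1+is)/2), the flag coordinates satisfy z₁₂ = z, z₂₁ = z̄(s+i)/(t+i), and the CR relation z₁₂·z₂₁ = conjugate(z₃₄·z₄₃) holds, where z₃₄ = z[(t+i) − z̄(s+i)]/((z−1)(t−i)) and z₄₃ = z̄(z−1)(s−i)/((t+i)−z̄(s+i)). -/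

import Mathlib

/-- The determinant of three vectors of `K³` w.r.t. the canonical basis. -/
def det3 {K : Type*} [Field K] (a b c : Fin 3 → K) : K :=
  Matrix.det (Matrix.of ![a, b, c])

/-- A generic configuration of (affine) flags `(xᵢ, fᵢ)`: each `fᵢ` vanishes on `xᵢ`,
the points are in general position (any three of the `xᵢ` are linearly independent),
and `f j (x i) ≠ 0` for `i ≠ j`. -/
structure IsGenericConfig {K : Type*} [Field K] {ι : Type*}
    (x : ι → Fin 3 → K) (f : ι → Module.Dual K (Fin 3 → K)) : Prop where
  flag : ∀ i, f i (x i) = 0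
  pos : ∀ i j l, i ≠ j → i ≠ l → j ≠ l → det3 (x i) (x j) (x l) ≠ 0
  nondeg : ∀ i j, i ≠ j → f j (x i) ≠ 0

/-- The edge coordinate `z_ij = f_i(x_k)·det(x_i,x_j,x_l) / (f_i(x_l)·det(x_i,x_j,x_k))`
of a tetrahedron of flags, for `(i,j,k,l)` an even permutation of the four vertices. -/
def zEdge {K : Type*} [Field K] (x : Fin 4 → Fin 3 → K)
    (f : Fin 4 → Module.Dual K (Fin 3 → K)) (i j k l : Fin 4) : K :=
  f i (x k) * det3 (x i) (x j) (x l) / (f i (x l) * det3 (x i) (x j) (x k))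

/-- The triple ratio `z_ijk = f_i(x_j)f_j(x_k)f_k(x_i)/(f_i(x_k)f_j(x_i)f_k(x_j))`. -/
def zFace {K : Type*} [Field K] {ι : Type*} (x : ι → Fin 3 → K)
    (f : ι → Module.Dual K (Fin 3 → K)) (i j k : ι) : K :=
  f i (x j) * f j (x k) * f k (x i) / (f i (x k) * f j (x i) * f k (x j))

/-- The linear form on `ℂ³` with coefficient vector `w`: `v ↦ w₀v₀ + w₁v₁ + w₂v₂`. -/
noncomputable def coeffForm (w : Fin 3 → ℂ) : Module.Dual ℂ (Fin 3 → ℂ) :=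
  w 0 • (LinearMap.proj 0 : (Fin 3 → ℂ) →ₗ[ℂ] ℂ)
    + w 1 • (LinearMap.proj 1 : (Fin 3 → ℂ) →ₗ[ℂ] ℂ)
    + w 2 • (LinearMap.proj 2 : (Fin 3 → ℂ) →ₗ[ℂ] ℂ)

/-- For the standard configuration of four points on the CR sphere `S³` with their
tangent-line duals, the flag coordinates satisfy `z₁₂ = z`, `z₂₁ = z̄(s+i)/(t+i)`, the
stated formulas for `z₃₄`, `z₄₃`, and the CR relation `z₁₂·z₂₁ = conj(z₃₄·z₄₃)`. -/
theorem cr_tetrahedron_coords (z : ℂ) (s t : ℝ)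
    (hz0 : z ≠ 0) (hz1 : z ≠ 1)
    (hgen : starRingEnd ℂ z * ((s : ℂ) + Complex.I) / ((t : ℂ) + Complex.I) ≠ 1)
    (hden : ((t : ℂ) + Complex.I) - starRingEnd ℂ z * ((s : ℂ) + Complex.I) ≠ 0) :
    let x : Fin 4 → Fin 3 → ℂ :=
      ![![1, 0, 0], ![0, 0, 1],
        ![(-1 + Complex.I * (t : ℂ)) / 2, 1, 1],
        ![((‖z‖ : ℂ))^2 * (-1 + Complex.I * (s : ℂ)) / 2, z, 1]]
    let f : Fin 4 → Module.Dual ℂ (Fin 3 → ℂ) :=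
      ![coeffForm ![0, 0, 1], coeffForm ![1, 0, 0],
        coeffForm ![1, 1, (-1 - Complex.I * (t : ℂ)) / 2],
        coeffForm ![1, starRingEnd ℂ z,
          -((‖z‖ : ℂ))^2 * (1 + Complex.I * (s : ℂ)) / 2]]
    zEdge x f 0 1 2 3 = z ∧
    zEdge x f 1 0 3 2 = starRingEnd ℂ z * ((s : ℂ) + Complex.I) / ((t : ℂ) + Complex.I) ∧
    zEdge x f 2 3 0 1
      = z * (((t : ℂ) + Complex.I) - starRingEnd ℂ z * ((s : ℂ) + Complex.I))
          / ((z - 1) * ((t : ℂ) - Complex.I)) ∧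
    zEdge x f 3 2 1 0
      = starRingEnd ℂ z * (z - 1) * ((s : ℂ) - Complex.I)
          / (((t : ℂ) + Complex.I) - starRingEnd ℂ z * ((s : ℂ) + Complex.I)) ∧
    zEdge x f 0 1 2 3 * zEdge x f 1 0 3 2
      = starRingEnd ℂ (zEdge x f 2 3 0 1 * zEdge x f 3 2 1 0) := by
  intro x f
  have htI : (t:ℂ) + Complex.I ≠ 0 := by
    intro h; simpa using congrArg Complex.im h
  have htI' : (t:ℂ) - Complex.I ≠ 0 := by
    intro h; simpa using congrArg Complex.im h
  have hit : (-1 : ℂ) + Complex.I * t ≠ 0 := by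
    intro h; simpa using congrArg Complex.re h
  have hit' : (-1 : ℂ) - Complex.I * t ≠ 0 := by
    intro h; simpa using congrArg Complex.re h
  have hz1' : z - 1 ≠ 0 := sub_ne_zero.mpr hz1
  have hcz : starRingEnd ℂ z ≠ 0 := by simpa using hz0
  have hcz1 : starRingEnd ℂ z - 1 ≠ 0 := by
    intro h
    apply hz1'
    have := congrArg (starRingEnd ℂ) h
    simpa using this
  have hden' : ((t:ℂ) - Complex.I) - z * ((s:ℂ) - Complex.I) ≠ 0 := by
    intro h
    apply hden
    have := congrArg (starRingEnd ℂ) h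
    simpa [map_sub, map_mul, Complex.conj_ofReal, Complex.conj_I] using this
  have habs : ((‖z‖ : ℂ))^2 = starRingEnd ℂ z * z := by
    rw [← Complex.ofReal_pow, Complex.sq_norm, Complex.normSq_eq_conj_mul_self]
  have hI3 : Complex.I ^ 3 = -Complex.I := by
    rw [pow_succ, Complex.I_sq]; ring
  have h1 : zEdge x f 0 1 2 3 = z := by
    simp only [zEdge, det3, coeffForm, x, f, Matrix.cons_val_zero, Matrix.cons_val_one,
      Matrix.head_cons, Matrix.cons_val_two, Matrix.tail_cons, Matrix.cons_val_three,
      Matrix.det_fin_three, Matrix.of_apply, LinearMap.add_apply, LinearMap.smul_apply,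
      LinearMap.proj_apply, smul_eq_mul, Matrix.cons_val']
    ring_nf
  have hB2 : f 1 (x 2) * det3 (x 1) (x 0) (x 3) ≠ 0 := by
    have e : f 1 (x 2) * det3 (x 1) (x 0) (x 3) = z * ((-1 : ℂ) + Complex.I * t) / 2 := by
      simp only [det3, coeffForm, x, f, Matrix.cons_val_zero, Matrix.cons_val_one,
        Matrix.head_cons, Matrix.cons_val_two, Matrix.tail_cons, Matrix.cons_val_three,
        Matrix.det_fin_three, Matrix.of_apply, LinearMap.add_apply, LinearMap.smul_apply,
        LinearMap.proj_apply, smul_eq_mul, Matrix.cons_val']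
      ring
    rw [e]
    exact div_ne_zero (mul_ne_zero hz0 hit) two_ne_zero
  have h2 : zEdge x f 1 0 3 2
      = starRingEnd ℂ z * ((s : ℂ) + Complex.I) / ((t : ℂ) + Complex.I) := by
    rw [zEdge, div_eq_div_iff hB2 htI]
    simp only [det3, coeffForm, x, f, Matrix.cons_val_zero, Matrix.cons_val_one,
      Matrix.head_cons, Matrix.cons_val_two, Matrix.tail_cons, Matrix.cons_val_three,
      Matrix.det_fin_three, Matrix.of_apply, LinearMap.add_apply, LinearMap.smul_apply,
      LinearMap.proj_apply, smul_eq_mul, Matrix.cons_val', habs]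
    ring_nf
    simp only [Complex.I_sq, hI3]
    ring
  have hB3 : f 2 (x 1) * det3 (x 2) (x 3) (x 0) ≠ 0 := by
    have e : f 2 (x 1) * det3 (x 2) (x 3) (x 0)
        = ((-1 : ℂ) - Complex.I * t) * (1 - z) / 2 := by
      simp only [det3, coeffForm, x, f, Matrix.cons_val_zero, Matrix.cons_val_one,
        Matrix.head_cons, Matrix.cons_val_two, Matrix.tail_cons, Matrix.cons_val_three,
        Matrix.det_fin_three, Matrix.of_apply, LinearMap.add_apply, LinearMap.smul_apply,
        LinearMap.proj_apply, smul_eq_mul, Matrix.cons_val']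
      ring
    rw [e]
    refine div_ne_zero (mul_ne_zero hit' ?_) two_ne_zero
    intro h
    exact hz1' (by linear_combination -h)
  have hD3 : (z - 1) * ((t : ℂ) - Complex.I) ≠ 0 := mul_ne_zero hz1' htI'
  have h3 : zEdge x f 2 3 0 1
      = z * (((t : ℂ) + Complex.I) - starRingEnd ℂ z * ((s : ℂ) + Complex.I))
          / ((z - 1) * ((t : ℂ) - Complex.I)) := by
    rw [zEdge, div_eq_div_iff hB3 hD3]
    simp only [det3, coeffForm, x, f, Matrix.cons_val_zero, Matrix.cons_val_one,
      Matrix.head_cons, Matrix.cons_val_two, Matrix.tail_cons, Matrix.cons_val_three,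
      Matrix.det_fin_three, Matrix.of_apply, LinearMap.add_apply, LinearMap.smul_apply,
      LinearMap.proj_apply, smul_eq_mul, Matrix.cons_val', habs]
    ring_nf
    simp only [Complex.I_sq, hI3]
    ring
  have hB4 : f 3 (x 0) * det3 (x 3) (x 2) (x 1) ≠ 0 := by
    have e : f 3 (x 0) * det3 (x 3) (x 2) (x 1)
        = -(z * Complex.I / 2) * (((t : ℂ) + Complex.I)
            - starRingEnd ℂ z * ((s : ℂ) + Complex.I)) := by
      simp only [det3, coeffForm, x, f, Matrix.cons_val_zero, Matrix.cons_val_one,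
        Matrix.head_cons, Matrix.cons_val_two, Matrix.tail_cons, Matrix.cons_val_three,
        Matrix.det_fin_three, Matrix.of_apply, LinearMap.add_apply, LinearMap.smul_apply,
        LinearMap.proj_apply, smul_eq_mul, Matrix.cons_val', habs]
      ring_nf
      simp only [Complex.I_sq, hI3]
      ring
    rw [e]
    refine mul_ne_zero ?_ hden
    simp [hz0, Complex.I_ne_zero]
  have h4 : zEdge x f 3 2 1 0
      = starRingEnd ℂ z * (z - 1) * ((s : ℂ) - Complex.I)
          / (((t : ℂ) + Complex.I) - starRingEnd ℂ z * ((s : ℂ) + Complex.I)) := by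
    rw [zEdge, div_eq_div_iff hB4 hden]
    simp only [det3, coeffForm, x, f, Matrix.cons_val_zero, Matrix.cons_val_one,
      Matrix.head_cons, Matrix.cons_val_two, Matrix.tail_cons, Matrix.cons_val_three,
      Matrix.det_fin_three, Matrix.of_apply, LinearMap.add_apply, LinearMap.smul_apply,
      LinearMap.proj_apply, smul_eq_mul, Matrix.cons_val', habs]
    ring_nf
    simp only [Complex.I_sq, hI3]
    ring
  refine ⟨h1, h2, h3, h4, ?_⟩
  rw [h1, h2, h3, h4]
  simp only [map_mul, map_div₀, map_sub, map_add, Complex.conj_ofReal, Complex.conj_I,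
    Complex.conj_conj, map_one]
  rw [div_mul_div_comm, ← mul_div_assoc,
    div_eq_div_iff htI (by
      simp only [sub_neg_eq_add, ← sub_eq_add_neg]
      exact mul_ne_zero (mul_ne_zero hcz1 htI) hden')]
  ring_nf
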